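/- For an opmonoidal monad (T, τ², τ⁰) on a monoidal category A, the Eilenberg–Moore category A^T carries a monoidal structure with tensor product (X, ξ) ⊗ (Y, υ) = (X ⊗ Y, (ξ ⊗ υ) ∘ τ²_{X,Y}) and unit (I, τ⁰), such that the forgetful functor A^T → A is strict monoidal. -/

import Mathlib

open CategoryTheory MonoidalCategory

/-- Auxiliary predicate for STATEMENT 4, expressing that a given monoidal structure on the
Eilenberg–Moore category `A^T` has tensor product `(X,ξ) ⊗ (Y,υ) = (X ⊗ Y, (ξ ⊗ υ) ∘ τ²)`,
unit `(I, τ⁰)`, and that the forgetful functor is strict monoidal. -/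
def Stmt4Conclusion {A : Type*} [Category A] [MonoidalCategory A]
    (T : CategoryTheory.Monad A)
    (τ₂ : ∀ X Y : A, T.obj (X ⊗ Y) ⟶ T.obj X ⊗ T.obj Y) (τ₀ : T.obj (𝟙_ A) ⟶ 𝟙_ A)
    [MonoidalCategory T.Algebra] : Prop :=
  ∃ (hOb : ∀ a b : T.Algebra, (a ⊗ b).A = a.A ⊗ b.A)
    (hU : (𝟙_ T.Algebra).A = 𝟙_ A)
    (hL : ∀ a b c : T.Algebra, ((a ⊗ b) ⊗ c).A = (a.A ⊗ b.A) ⊗ c.A)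
    (hR : ∀ a b c : T.Algebra, (a ⊗ (b ⊗ c)).A = a.A ⊗ (b.A ⊗ c.A))
    (hLU : ∀ a : T.Algebra, ((𝟙_ T.Algebra) ⊗ a).A = 𝟙_ A ⊗ a.A)
    (hRU : ∀ a : T.Algebra, (a ⊗ (𝟙_ T.Algebra)).A = a.A ⊗ 𝟙_ A),
    -- the tensor product of two algebras has the stated structure morphism
    (∀ a b : T.Algebra, (a ⊗ b).a =
      T.map (eqToHom (hOb a b)) ≫ τ₂ a.A b.A ≫ (a.a ⊗ₘ b.a) ≫ eqToHom (hOb a b).symm) ∧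
    -- the monoidal unit is `(I, τ⁰)`
    ((𝟙_ T.Algebra).a = T.map (eqToHom hU) ≫ τ₀ ≫ eqToHom hU.symm) ∧
    -- the forgetful functor is strict monoidal (on tensor products of morphisms and on
    -- the coherence isomorphisms)
    (∀ (a b c d : T.Algebra) (f : a ⟶ c) (g : b ⟶ d),
      (f ⊗ₘ g).f = eqToHom (hOb a b) ≫ (f.f ⊗ₘ g.f) ≫ eqToHom (hOb c d).symm) ∧
    (∀ a b c : T.Algebra,
      (α_ a b c).hom.f = eqToHom (hL a b c) ≫ (α_ a.A b.A c.A).hom ≫ eqToHom (hR a b c).symm) ∧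
    (∀ a : T.Algebra, (λ_ a).hom.f = eqToHom (hLU a) ≫ (λ_ a.A).hom) ∧
    (∀ a : T.Algebra, (ρ_ a).hom.f = eqToHom (hRU a) ≫ (ρ_ a.A).hom)

section OpmonoidalEM

variable {A : Type*} [Category A] [MonoidalCategory A] (T : CategoryTheory.Monad A)
variable (τ₂ : ∀ X Y : A, T.obj (X ⊗ Y) ⟶ T.obj X ⊗ T.obj Y) (τ₀ : T.obj (𝟙_ A) ⟶ 𝟙_ A)

/-- tensor product of algebras -/
@[simps] def emTensorObj
    (hnat : ∀ {X Y X' Y' : A} (f : X ⟶ X') (g : Y ⟶ Y'),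
      T.map (f ⊗ₘ g) ≫ τ₂ X' Y' = τ₂ X Y ≫ (T.map f ⊗ₘ T.map g))
    (hμ₂ : ∀ X Y : A, T.μ.app (X ⊗ Y) ≫ τ₂ X Y =
        T.map (τ₂ X Y) ≫ τ₂ (T.obj X) (T.obj Y) ≫ (T.μ.app X ⊗ₘ T.μ.app Y))
    (hη₂ : ∀ X Y : A, T.η.app (X ⊗ Y) ≫ τ₂ X Y = T.η.app X ⊗ₘ T.η.app Y)
    (a b : T.Algebra) : T.Algebra where
  A := a.A ⊗ b.A
  a := τ₂ a.A b.A ≫ (a.a ⊗ₘ b.a)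
  unit := by
    rw [reassoc_of% (hη₂ a.A b.A), tensorHom_comp_tensorHom, a.unit, b.unit, id_tensorHom_id]
  assoc := by
    rw [reassoc_of% (hμ₂ a.A b.A)]
    calc T.map (τ₂ a.A b.A) ≫ τ₂ (T.obj a.A) (T.obj b.A) ≫
          (T.μ.app a.A ⊗ₘ T.μ.app b.A) ≫ (a.a ⊗ₘ b.a)
        = T.map (τ₂ a.A b.A) ≫ τ₂ (T.obj a.A) (T.obj b.A) ≫
            (T.map a.a ⊗ₘ T.map b.a) ≫ (a.a ⊗ₘ b.a) := by
          rw [tensorHom_comp_tensorHom, a.assoc, b.assoc, ← tensorHom_comp_tensorHom]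
      _ = T.map (τ₂ a.A b.A) ≫ T.map (a.a ⊗ₘ b.a) ≫ τ₂ a.A b.A ≫ (a.a ⊗ₘ b.a) := by
          rw [reassoc_of% (hnat a.a b.a)]
      _ = T.map (τ₂ a.A b.A ≫ (a.a ⊗ₘ b.a)) ≫ τ₂ a.A b.A ≫ (a.a ⊗ₘ b.a) := by
          rw [Functor.map_comp, Category.assoc]

/-- the unit algebra -/
@[simps] def emUnit
    (hμ₀ : T.μ.app (𝟙_ A) ≫ τ₀ = T.map τ₀ ≫ τ₀)
    (hη₀ : T.η.app (𝟙_ A) ≫ τ₀ = 𝟙 (𝟙_ A)) : T.Algebra where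
  A := 𝟙_ A
  a := τ₀
  unit := hη₀
  assoc := hμ₀

end OpmonoidalEM

section OpmonoidalEM2

variable {A : Type*} [Category A] [MonoidalCategory A] {T : CategoryTheory.Monad A}
variable {τ₂ : ∀ X Y : A, T.obj (X ⊗ Y) ⟶ T.obj X ⊗ T.obj Y} {τ₀ : T.obj (𝟙_ A) ⟶ 𝟙_ A}

theorem emKey
    (hnat : ∀ {X Y X' Y' : A} (f : X ⟶ X') (g : Y ⟶ Y'),
      T.map (f ⊗ₘ g) ≫ τ₂ X' Y' = τ₂ X Y ≫ (T.map f ⊗ₘ T.map g))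
    {a b c d : T.Algebra} (f : a ⟶ c) (g : b ⟶ d) :
      T.map (f.f ⊗ₘ g.f) ≫ (τ₂ c.A d.A ≫ (c.a ⊗ₘ d.a)) =
        (τ₂ a.A b.A ≫ (a.a ⊗ₘ b.a)) ≫ (f.f ⊗ₘ g.f) := by
  rw [reassoc_of% (hnat f.f g.f), tensorHom_comp_tensorHom, f.h, g.h, ← tensorHom_comp_tensorHom, Category.assoc]

/-- the monoidal structure on Eilenberg-Moore algebras -/
def emStruct
    (hnat : ∀ {X Y X' Y' : A} (f : X ⟶ X') (g : Y ⟶ Y'),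
      T.map (f ⊗ₘ g) ≫ τ₂ X' Y' = τ₂ X Y ≫ (T.map f ⊗ₘ T.map g))
    (hcoassoc : ∀ X Y Z : A,
      τ₂ (X ⊗ Y) Z ≫ (τ₂ X Y ⊗ₘ 𝟙 (T.obj Z)) ≫ (α_ (T.obj X) (T.obj Y) (T.obj Z)).hom =
        T.map (α_ X Y Z).hom ≫ τ₂ X (Y ⊗ Z) ≫ (𝟙 (T.obj X) ⊗ₘ τ₂ Y Z))
    (hcounit_l : ∀ X : A,
      τ₂ (𝟙_ A) X ≫ (τ₀ ⊗ₘ 𝟙 (T.obj X)) ≫ (λ_ (T.obj X)).hom = T.map (λ_ X).hom)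
    (hcounit_r : ∀ X : A,
      τ₂ X (𝟙_ A) ≫ (𝟙 (T.obj X) ⊗ₘ τ₀) ≫ (ρ_ (T.obj X)).hom = T.map (ρ_ X).hom)
    (hμ₂ : ∀ X Y : A, T.μ.app (X ⊗ Y) ≫ τ₂ X Y =
        T.map (τ₂ X Y) ≫ τ₂ (T.obj X) (T.obj Y) ≫ (T.μ.app X ⊗ₘ T.μ.app Y))
    (hμ₀ : T.μ.app (𝟙_ A) ≫ τ₀ = T.map τ₀ ≫ τ₀)
    (hη₂ : ∀ X Y : A, T.η.app (X ⊗ Y) ≫ τ₂ X Y = T.η.app X ⊗ₘ T.η.app Y)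
    (hη₀ : T.η.app (𝟙_ A) ≫ τ₀ = 𝟙 (𝟙_ A)) :
    MonoidalCategoryStruct T.Algebra where
  tensorObj := emTensorObj T τ₂ hnat hμ₂ hη₂
  tensorHom := fun f g => { f := f.f ⊗ₘ g.f, h := emKey hnat f g }
  whiskerLeft := fun a _ _ g => { f := 𝟙 a.A ⊗ₘ g.f, h := emKey hnat (𝟙 a) g }
  whiskerRight := fun f b => { f := f.f ⊗ₘ 𝟙 b.A, h := emKey hnat f (𝟙 b) }
  tensorUnit := emUnit T τ₀ hμ₀ hη₀
  associator := fun a b c => Monad.Algebra.isoMk (α_ a.A b.A c.A) (by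
    dsimp [emTensorObj]
    calc T.map (α_ a.A b.A c.A).hom ≫
          τ₂ a.A (b.A ⊗ c.A) ≫ (a.a ⊗ₘ τ₂ b.A c.A ≫ (b.a ⊗ₘ c.a))
        = T.map (α_ a.A b.A c.A).hom ≫ τ₂ a.A (b.A ⊗ c.A) ≫
            (𝟙 (T.obj a.A) ⊗ₘ τ₂ b.A c.A) ≫ (a.a ⊗ₘ (b.a ⊗ₘ c.a)) := by
          rw [tensorHom_comp_tensorHom, Category.id_comp]
      _ = τ₂ (a.A ⊗ b.A) c.A ≫ (τ₂ a.A b.A ⊗ₘ 𝟙 (T.obj c.A)) ≫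
            (α_ (T.obj a.A) (T.obj b.A) (T.obj c.A)).hom ≫ (a.a ⊗ₘ (b.a ⊗ₘ c.a)) := by
          rw [← reassoc_of% (hcoassoc a.A b.A c.A)]
      _ = τ₂ (a.A ⊗ b.A) c.A ≫ (τ₂ a.A b.A ⊗ₘ 𝟙 (T.obj c.A)) ≫
            ((a.a ⊗ₘ b.a) ⊗ₘ c.a) ≫ (α_ a.A b.A c.A).hom := by
          rw [MonoidalCategory.associator_naturality]
      _ = (τ₂ (a.A ⊗ b.A) c.A ≫ (τ₂ a.A b.A ≫ (a.a ⊗ₘ b.a) ⊗ₘ c.a)) ≫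
            (α_ a.A b.A c.A).hom := by
          rw [tensorHom_comp_tensorHom_assoc, Category.id_comp, Category.assoc])
  leftUnitor := fun a => Monad.Algebra.isoMk (λ_ a.A) (by
    dsimp [emTensorObj, emUnit]
    calc T.map (λ_ a.A).hom ≫ a.a
        = τ₂ (𝟙_ A) a.A ≫ (τ₀ ⊗ₘ 𝟙 (T.obj a.A)) ≫ (λ_ (T.obj a.A)).hom ≫ a.a := by
          rw [← reassoc_of% (hcounit_l a.A)]
      _ = τ₂ (𝟙_ A) a.A ≫ (τ₀ ⊗ₘ 𝟙 (T.obj a.A)) ≫ (𝟙 (𝟙_ A) ⊗ₘ a.a) ≫ (λ_ a.A).hom := by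
          rw [id_tensorHom, MonoidalCategory.leftUnitor_naturality]
      _ = (τ₂ (𝟙_ A) a.A ≫ (τ₀ ⊗ₘ a.a)) ≫ (λ_ a.A).hom := by
          rw [tensorHom_comp_tensorHom_assoc, Category.comp_id, Category.id_comp, Category.assoc])
  rightUnitor := fun a => Monad.Algebra.isoMk (ρ_ a.A) (by
    dsimp [emTensorObj, emUnit]
    calc T.map (ρ_ a.A).hom ≫ a.a
        = τ₂ a.A (𝟙_ A) ≫ (𝟙 (T.obj a.A) ⊗ₘ τ₀) ≫ (ρ_ (T.obj a.A)).hom ≫ a.a := by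
          rw [← reassoc_of% (hcounit_r a.A)]
      _ = τ₂ a.A (𝟙_ A) ≫ (𝟙 (T.obj a.A) ⊗ₘ τ₀) ≫ (a.a ⊗ₘ 𝟙 (𝟙_ A)) ≫ (ρ_ a.A).hom := by
          rw [tensorHom_id, MonoidalCategory.rightUnitor_naturality]
      _ = (τ₂ a.A (𝟙_ A) ≫ (a.a ⊗ₘ τ₀)) ≫ (ρ_ a.A).hom := by
          rw [tensorHom_comp_tensorHom_assoc, Category.comp_id, Category.id_comp, Category.assoc])

end OpmonoidalEM2

/-- For an opmonoidal monad `(T, τ², τ⁰)` on a monoidal category `A`, the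
Eilenberg–Moore category `A^T` carries a monoidal structure with the stated tensor product
and unit, such that the forgetful functor `A^T ⥤ A` is strict monoidal. -/
theorem stmt_4 {A : Type*} [Category A] [MonoidalCategory A]
    (T : CategoryTheory.Monad A)
    (τ₂ : ∀ X Y : A, T.obj (X ⊗ Y) ⟶ T.obj X ⊗ T.obj Y)
    (τ₀ : T.obj (𝟙_ A) ⟶ 𝟙_ A)
    (hnat : ∀ {X Y X' Y' : A} (f : X ⟶ X') (g : Y ⟶ Y'),
      T.map (f ⊗ₘ g) ≫ τ₂ X' Y' = τ₂ X Y ≫ (T.map f ⊗ₘ T.map g))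
    (hcoassoc : ∀ X Y Z : A,
      τ₂ (X ⊗ Y) Z ≫ (τ₂ X Y ⊗ₘ 𝟙 (T.obj Z)) ≫ (α_ (T.obj X) (T.obj Y) (T.obj Z)).hom =
        T.map (α_ X Y Z).hom ≫ τ₂ X (Y ⊗ Z) ≫ (𝟙 (T.obj X) ⊗ₘ τ₂ Y Z))
    (hcounit_l : ∀ X : A,
      τ₂ (𝟙_ A) X ≫ (τ₀ ⊗ₘ 𝟙 (T.obj X)) ≫ (λ_ (T.obj X)).hom = T.map (λ_ X).hom)
    (hcounit_r : ∀ X : A,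
      τ₂ X (𝟙_ A) ≫ (𝟙 (T.obj X) ⊗ₘ τ₀) ≫ (ρ_ (T.obj X)).hom = T.map (ρ_ X).hom)
    -- the multiplication and unit of the monad are opmonoidal natural transformations
    (hμ₂ : ∀ X Y : A, T.μ.app (X ⊗ Y) ≫ τ₂ X Y =
        T.map (τ₂ X Y) ≫ τ₂ (T.obj X) (T.obj Y) ≫ (T.μ.app X ⊗ₘ T.μ.app Y))
    (hμ₀ : T.μ.app (𝟙_ A) ≫ τ₀ = T.map τ₀ ≫ τ₀)
    (hη₂ : ∀ X Y : A, T.η.app (X ⊗ Y) ≫ τ₂ X Y = T.η.app X ⊗ₘ T.η.app Y)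
    (hη₀ : T.η.app (𝟙_ A) ≫ τ₀ = 𝟙 (𝟙_ A)) :
    ∃ inst : MonoidalCategory T.Algebra, @Stmt4Conclusion A _ _ T τ₂ τ₀ inst := by
  refine ⟨@MonoidalCategory.ofTensorHom _ _ (emStruct @hnat hcoassoc hcounit_l hcounit_r hμ₂ hμ₀ hη₂ hη₀)
      ?_ ?_ ?_ ?_ ?_ ?_ ?_ ?_ ?_,
    fun a b => rfl, rfl, fun a b c => rfl, fun a b c => rfl, fun a => rfl, fun a => rfl,
    ?_, ?_, ?_, ?_, ?_, ?_⟩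
  · intros; ext; exact id_tensorHom_id _ _
  · intros; rfl
  · intros; rfl
  · intros; ext; exact tensorHom_comp_tensorHom _ _ _ _
  · intros; ext; exact MonoidalCategory.associator_naturality _ _ _
  · intro a b f; ext; show (𝟙 (𝟙_ A) ⊗ₘ f.f) ≫ (λ_ b.A).hom = (λ_ a.A).hom ≫ f.f
    rw [id_tensorHom]; exact MonoidalCategory.leftUnitor_naturality f.f
  · intro a b f; ext; show (f.f ⊗ₘ 𝟙 (𝟙_ A)) ≫ (ρ_ b.A).hom = (ρ_ a.A).hom ≫ f.f
    rw [tensorHom_id]; exact MonoidalCategory.rightUnitor_naturality f.f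
  · intro a b c d; ext; dsimp [emStruct, emTensorObj]
    show ((α_ a.A b.A c.A).hom ⊗ₘ 𝟙 d.A) ≫ (α_ a.A (b.A ⊗ c.A) d.A).hom ≫ (𝟙 a.A ⊗ₘ (α_ b.A c.A d.A).hom) = (α_ (a.A ⊗ b.A) c.A d.A).hom ≫ (α_ a.A b.A (c.A ⊗ d.A)).hom
    rw [tensorHom_id, id_tensorHom]; exact MonoidalCategory.pentagon _ _ _ _
  · intro a b; ext; dsimp [emStruct, emTensorObj, emUnit]
    show (α_ a.A (𝟙_ A) b.A).hom ≫ (𝟙 a.A ⊗ₘ (λ_ b.A).hom) = (ρ_ a.A).hom ⊗ₘ 𝟙 b.A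
    rw [tensorHom_id, id_tensorHom]; exact MonoidalCategory.triangle _ _
  · intro a b
    erw [eqToHom_refl, CategoryTheory.Functor.map_id, Category.id_comp, Category.comp_id]
    rfl
  · erw [eqToHom_refl, CategoryTheory.Functor.map_id, Category.id_comp, Category.comp_id]
    rfl
  · intro a b c d f g
    erw [eqToHom_refl, Category.id_comp, Category.comp_id]
    rfl
  · intro a b c
    erw [eqToHom_refl, Category.id_comp, Category.comp_id]
    rfl
  · intro a
    erw [eqToHom_refl, Category.id_comp]
    rfl
  · intro a
    erw [eqToHom_refl, Category.id_comp]
    rfl
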